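/- Let Γ be a graph whose underlying unsigned graph Γ̄ is the complete graph on a 4-element vertex set V (every pair of distinct vertices of V is joined by at least one signed edge, and every signed edge of Γ has both endpoints in V). Let Γ' be the full subgraph of Γ determined by a 3-element subset V' ⊆ V, i.e., the graph whose signed edges are all signed edges of Γ with both endpoints in V'. If a 3-cocycle η : A(Γ) → 𝔽_3 takes one and the same value on all hyperplanes corresponding to signed edges of Γ', then η takes one and the same value on all hyperplanes corresponding to signed edges of Γ. -/

import Mathlib

open scoped Classical

noncomputable section

/-- A (candidate) hyperplane in `ℂ^l`: a submodule of `Fin l → ℂ`. -/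
abbrev Hyp (l : ℕ) := Submodule ℂ (Fin l → ℂ)

/-- `X` is a rank-2 flat of the central arrangement `A`. -/
def IsRank2Flat {l : ℕ} (A : Finset (Hyp l)) (X : Hyp l) : Prop :=
  ∃ H ∈ A, ∃ K ∈ A, H ≠ K ∧ X = H ⊓ K

/-- The hyperplanes of `A` containing the flat `X` (so `m_X = (flatHyps A X).card`). -/
def flatHyps {l : ℕ} (A : Finset (Hyp l)) (X : Hyp l) : Finset {H // H ∈ A} :=
  A.attach.filter fun L => X ≤ (L : Hyp l)

/-- `η : A → 𝔽_p` is a `p`-cocycle: for every rank-2 flat `X`, the sum of `η` over `A_X`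
vanishes when `p ∣ m_X`, and `η` is constant on `A_X` when `p ∤ m_X`. -/
def IsCocycle {l : ℕ} (p : ℕ) (A : Finset (Hyp l)) (η : {H // H ∈ A} → ZMod p) : Prop :=
  ∀ X : Hyp l, IsRank2Flat A X →
    ((p ∣ (flatHyps A X).card → ∑ L ∈ flatHyps A X, η L = 0) ∧
     (¬ p ∣ (flatHyps A X).card →
       ∀ H ∈ flatHyps A X, ∀ K ∈ flatHyps A X, η H = η K))

/-- The rank of a central arrangement in `ℂ^l`: the codimension of the intersection of
all its hyperplanes. -/
def arrRank {l : ℕ} (A : Finset (Hyp l)) : ℕ :=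
  l - Module.finrank ℂ ↥(A.inf id)

/-- A graph `Γ` in `[l]`: loops `E₁(Γ) ⊆ [l]`, and signed edges `ij^ε` (recorded with
`i < j`, the sign `ε` encoded by a `Bool`: `true ↦ +1`, `false ↦ -1`); a pair `{i,j}`
may carry one signed edge (a simple edge) or both (a double edge). -/
structure SGraph (l : ℕ) where
  loops : Finset (Fin l)
  edges : Finset (Fin l × Fin l × Bool)
  edges_lt : ∀ e ∈ edges, e.1 < e.2.1

/-- The hyperplane `x_i = 0` of a loop at `i`. -/
def loopHyp {l : ℕ} (i : Fin l) : Hyp l :=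
  LinearMap.ker (LinearMap.proj i : (Fin l → ℂ) →ₗ[ℂ] ℂ)

/-- The hyperplane `x_i + ε·x_j = 0` of a signed edge `ij^ε`. -/
def edgeHyp {l : ℕ} (i j : Fin l) (b : Bool) : Hyp l :=
  LinearMap.ker ((LinearMap.proj i : (Fin l → ℂ) →ₗ[ℂ] ℂ)
    + (if b then (1 : ℂ) else -1) • (LinearMap.proj j : (Fin l → ℂ) →ₗ[ℂ] ℂ))

/-- The graphic arrangement `A(Γ)` in `ℂ^l`. -/
def graphArr {l : ℕ} (G : SGraph l) : Finset (Hyp l) :=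
  G.loops.image loopHyp ∪ G.edges.image fun e => edgeHyp e.1 e.2.1 e.2.2

/-- The (unordered) signed edge `ij^ε` belongs to `Γ`. -/
def SGraph.hasEdge {l : ℕ} (G : SGraph l) (i j : Fin l) (b : Bool) : Prop :=
  (i, j, b) ∈ G.edges ∨ (j, i, b) ∈ G.edges

/-- The hyperplane `H ∈ A(Γ)` corresponds to a signed edge of `Γ` with both endpoints
in the vertex set `S`. -/
def fromEdgeIn {l : ℕ} (G : SGraph l) (S : Finset (Fin l))
    (H : {H // H ∈ graphArr G}) : Prop :=
  ∃ e ∈ G.edges, e.1 ∈ S ∧ e.2.1 ∈ S ∧ (H : Hyp l) = edgeHyp e.1 e.2.1 e.2.2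

def sg (b : Bool) : ℂ := if b then 1 else -1

lemma sg_ne_zero (b : Bool) : sg b ≠ 0 := by cases b <;> norm_num [sg]

lemma mem_edgeHyp {l : ℕ} {i j : Fin l} {b : Bool} {x : Fin l → ℂ} :
    x ∈ edgeHyp i j b ↔ x i + sg b * x j = 0 := by
  cases b <;>
    simp [edgeHyp, sg, LinearMap.mem_ker, LinearMap.add_apply, LinearMap.smul_apply,
      smul_eq_mul]

lemma mem_loopHyp {l : ℕ} {i : Fin l} {x : Fin l → ℂ} : x ∈ loopHyp i ↔ x i = 0 := by
  simp [loopHyp, LinearMap.mem_ker]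

/-- witness vector supported on `{a,b}` lying in `edgeHyp a b ε`. -/
def wvec {l : ℕ} (a b : Fin l) (ε : Bool) : Fin l → ℂ :=
  fun t => if t = a then 1 else if t = b then -(sg ε) else 0

lemma wvec_mem_self {l : ℕ} {a b : Fin l} (hab : a ≠ b) (ε : Bool) :
    wvec a b ε ∈ edgeHyp a b ε := by
  rw [mem_edgeHyp]
  simp only [wvec, if_pos rfl, if_neg (Ne.symm hab)]
  cases ε <;> norm_num [sg]

lemma wvec_mem_other {l : ℕ} {a b c d : Fin l} {ε δ : Bool}
    (hca : c ≠ a) (hcb : c ≠ b) (hda : d ≠ a) (hdb : d ≠ b) :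
    wvec a b ε ∈ edgeHyp c d δ := by
  rw [mem_edgeHyp]
  simp [wvec, hca, hcb, hda, hdb]

lemma single_mem_edge {l : ℕ} {m c d : Fin l} {δ : Bool} (hc : c ≠ m) (hd : d ≠ m) :
    (fun t => if t = m then (1:ℂ) else 0) ∈ edgeHyp c d δ := by
  rw [mem_edgeHyp]
  simp [hc, hd]

lemma le_edge_char {l : ℕ} {a₁ a₂ b₁ b₂ m n : Fin l} {ε δ q : Bool}
    (h12 : a₁ ≠ a₂) (h34 : b₁ ≠ b₂) (h13 : a₁ ≠ b₁) (h14 : a₁ ≠ b₂)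
    (h23 : a₂ ≠ b₁) (h24 : a₂ ≠ b₂) (hmn : m ≠ n)
    (h : edgeHyp a₁ a₂ ε ⊓ edgeHyp b₁ b₂ δ ≤ edgeHyp m n q) :
    (m = a₁ ∧ n = a₂ ∧ q = ε) ∨ (m = a₂ ∧ n = a₁ ∧ q = ε) ∨
    (m = b₁ ∧ n = b₂ ∧ q = δ) ∨ (m = b₂ ∧ n = b₁ ∧ q = δ) := by
  have hv1 : wvec a₁ a₂ ε ∈ edgeHyp a₁ a₂ ε ⊓ edgeHyp b₁ b₂ δ :=
    Submodule.mem_inf.mpr ⟨wvec_mem_self h12 ε,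
      wvec_mem_other h13.symm h23.symm h14.symm h24.symm⟩
  have hv2 : wvec b₁ b₂ δ ∈ edgeHyp a₁ a₂ ε ⊓ edgeHyp b₁ b₂ δ :=
    Submodule.mem_inf.mpr ⟨wvec_mem_other h13 h14 h23 h24, wvec_mem_self h34 δ⟩
  have E1 : wvec a₁ a₂ ε m + sg q * wvec a₁ a₂ ε n = 0 := mem_edgeHyp.mp (h hv1)
  have E2 : wvec b₁ b₂ δ m + sg q * wvec b₁ b₂ δ n = 0 := mem_edgeHyp.mp (h hv2)
  have hm : m = a₁ ∨ m = a₂ ∨ m = b₁ ∨ m = b₂ ∨ (m ≠ a₁ ∧ m ≠ a₂ ∧ m ≠ b₁ ∧ m ≠ b₂) := by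
    tauto
  have hn : n = a₁ ∨ n = a₂ ∨ n = b₁ ∨ n = b₂ ∨ (n ≠ a₁ ∧ n ≠ a₂ ∧ n ≠ b₁ ∧ n ≠ b₂) := by
    tauto
  have h21 : a₂ ≠ a₁ := h12.symm
  have h31 : b₁ ≠ a₁ := h13.symm
  have h41 : b₂ ≠ a₁ := h14.symm
  have h32 : b₁ ≠ a₂ := h23.symm
  have h42 : b₂ ≠ a₂ := h24.symm
  have h43 : b₂ ≠ b₁ := h34.symm
  have hnm : n ≠ m := hmn.symm
  rcases hm with rfl | rfl | rfl | rfl | ⟨hm1, hm2, hm3, hm4⟩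
  · rcases hn with rfl | rfl | rfl | rfl | ⟨hn1, hn2, hn3, hn4⟩
    all_goals try exact absurd rfl hmn
    all_goals
      (clear h hv1 hv2
       simp_all only [wvec]
       try simp_all
       try (cases q <;> cases ε <;> cases δ <;> simp_all [sg] <;> norm_num))
  · rcases hn with rfl | rfl | rfl | rfl | ⟨hn1, hn2, hn3, hn4⟩
    all_goals try exact absurd rfl hmn
    all_goals
      (clear h hv1 hv2
       simp_all only [wvec]
       try simp_all
       try (cases q <;> cases ε <;> cases δ <;> simp_all [sg] <;> norm_num))
  · rcases hn with rfl | rfl | rfl | rfl | ⟨hn1, hn2, hn3, hn4⟩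
    all_goals try exact absurd rfl hmn
    all_goals
      (clear h hv1 hv2
       simp_all only [wvec]
       try simp_all
       try (cases q <;> cases ε <;> cases δ <;> simp_all [sg] <;> norm_num))
  · rcases hn with rfl | rfl | rfl | rfl | ⟨hn1, hn2, hn3, hn4⟩
    all_goals try exact absurd rfl hmn
    all_goals
      (clear h hv1 hv2
       simp_all only [wvec]
       try simp_all
       try (cases q <;> cases ε <;> cases δ <;> simp_all [sg] <;> norm_num))
  · rcases hn with rfl | rfl | rfl | rfl | ⟨hn1, hn2, hn3, hn4⟩
    rotate_right
    · exfalso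
      have hv3 : (fun t => if t = m then (1:ℂ) else 0) ∈ edgeHyp a₁ a₂ ε ⊓ edgeHyp b₁ b₂ δ :=
        Submodule.mem_inf.mpr ⟨single_mem_edge (Ne.symm hm1) (Ne.symm hm2),
          single_mem_edge (Ne.symm hm3) (Ne.symm hm4)⟩
      have E3 := mem_edgeHyp.mp (h hv3)
      simp [hnm, sg_ne_zero] at E3
    all_goals try exact absurd rfl hmn
    all_goals
      (clear h hv1 hv2
       simp_all only [wvec]
       try simp_all
       try (cases q <;> cases ε <;> cases δ <;> simp_all [sg] <;> norm_num))

lemma not_inf_le_loop {l : ℕ} {a₁ a₂ b₁ b₂ i : Fin l} {ε δ : Bool}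
    (h12 : a₁ ≠ a₂) (h34 : b₁ ≠ b₂) (h13 : a₁ ≠ b₁) (h14 : a₁ ≠ b₂) (h23 : a₂ ≠ b₁)
    (h24 : a₂ ≠ b₂) :
    ¬ (edgeHyp a₁ a₂ ε ⊓ edgeHyp b₁ b₂ δ ≤ loopHyp i) := by
  intro h
  have hw : (fun t => if t = a₁ then (1:ℂ) else if t = a₂ then -(sg ε) else
      if t = b₁ then 1 else if t = b₂ then -(sg δ) else 1) ∈
      edgeHyp a₁ a₂ ε ⊓ edgeHyp b₁ b₂ δ := by
    refine Submodule.mem_inf.mpr ⟨?_, ?_⟩ <;> rw [mem_edgeHyp] <;>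
      simp only [if_pos rfl, if_neg (Ne.symm h12), if_neg (Ne.symm h13),
        if_neg (Ne.symm h14), if_neg (Ne.symm h23), if_neg (Ne.symm h24),
        if_neg (Ne.symm h34)] <;>
      cases ε <;> cases δ <;> norm_num [sg]
  have := mem_loopHyp.mp (h hw)
  split_ifs at this <;> cases ε <;> cases δ <;> norm_num [sg] at this

lemma edge_ne_edge {l : ℕ} {a₁ a₂ b₁ b₂ : Fin l} {ε δ : Bool}
    (h12 : a₁ ≠ a₂) (h13 : a₁ ≠ b₁) (h14 : a₁ ≠ b₂) :
    edgeHyp a₁ a₂ ε ≠ edgeHyp b₁ b₂ δ := by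
  intro h
  have h1 : (fun t => if t = a₁ then (1:ℂ) else 0) ∈ edgeHyp b₁ b₂ δ :=
    single_mem_edge (Ne.symm h13) (Ne.symm h14)
  rw [← h, mem_edgeHyp] at h1
  simp [Ne.symm h12] at h1

lemma edge_mem_arr {l : ℕ} (G : SGraph l) {e : Fin l × Fin l × Bool} (he : e ∈ G.edges) :
    edgeHyp e.1 e.2.1 e.2.2 ∈ graphArr G :=
  Finset.mem_union_right _ (Finset.mem_image.mpr ⟨e, he, rfl⟩)

lemma eta_eq_of_disjoint {l : ℕ} (G : SGraph l) (η : {H // H ∈ graphArr G} → ZMod 3)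
    (hη : IsCocycle 3 (graphArr G) η)
    {e f : Fin l × Fin l × Bool} (he : e ∈ G.edges) (hf : f ∈ G.edges)
    (h13 : e.1 ≠ f.1) (h14 : e.1 ≠ f.2.1) (h23 : e.2.1 ≠ f.1) (h24 : e.2.1 ≠ f.2.1) :
    η ⟨_, edge_mem_arr G he⟩ = η ⟨_, edge_mem_arr G hf⟩ := by
  have h12 : e.1 ≠ e.2.1 := ne_of_lt (G.edges_lt e he)
  have h34 : f.1 ≠ f.2.1 := ne_of_lt (G.edges_lt f hf)
  set H := edgeHyp e.1 e.2.1 e.2.2 with hH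
  set K := edgeHyp f.1 f.2.1 f.2.2 with hK
  have hne : H ≠ K := edge_ne_edge h12 h13 h14
  have hset : flatHyps (graphArr G) (H ⊓ K) =
      {⟨H, edge_mem_arr G he⟩, ⟨K, edge_mem_arr G hf⟩} := by
    ext L
    simp only [flatHyps, Finset.mem_filter, Finset.mem_attach, true_and,
      Finset.mem_insert, Finset.mem_singleton]
    constructor
    · intro hle
      have hLmem := L.2
      simp only [graphArr, Finset.mem_union] at hLmem
      rcases hLmem with hl | hl
      · obtain ⟨i, _, hLi⟩ := Finset.mem_image.mp hl
        exact absurd (hLi ▸ hle) (not_inf_le_loop h12 h34 h13 h14 h23 h24)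
      · obtain ⟨g, hg, hLg⟩ := Finset.mem_image.mp hl
        have hg12 : g.1 ≠ g.2.1 := ne_of_lt (G.edges_lt g hg)
        have hchar := le_edge_char h12 h34 h13 h14 h23 h24 hg12 (hLg ▸ hle)
        rcases hchar with ⟨hx, hy, hz⟩ | ⟨hx, hy, hz⟩ | ⟨hx, hy, hz⟩ | ⟨hx, hy, hz⟩
        · left
          apply Subtype.ext
          rw [← hLg, hx, hy, hz]
        · exact absurd (hx ▸ hy ▸ G.edges_lt g hg) (lt_asymm (G.edges_lt e he))
        · right
          apply Subtype.ext
          rw [← hLg, hx, hy, hz]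
        · exact absurd (hx ▸ hy ▸ G.edges_lt g hg) (lt_asymm (G.edges_lt f hf))
    · rintro (rfl | rfl)
      · exact inf_le_left
      · exact inf_le_right
  have hcard : (flatHyps (graphArr G) (H ⊓ K)).card = 2 := by
    rw [hset]
    rw [Finset.card_insert_of_notMem (by simp [hne]), Finset.card_singleton]
  have hflat : IsRank2Flat (graphArr G) (H ⊓ K) :=
    ⟨H, edge_mem_arr G he, K, edge_mem_arr G hf, hne, rfl⟩
  exact (hη _ hflat).2 (by rw [hcard]; decide) _ (by rw [hset]; simp [hH, hK]) _ (by rw [hset]; simp [hH, hK])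

lemma hasEdge_elim {l : ℕ} (G : SGraph l) {x y : Fin l} {ε : Bool}
    (h : G.hasEdge x y ε) (S : Finset (Fin l)) (hx : x ∈ S) (hy : y ∈ S) :
    ∃ e ∈ G.edges, e.1 ∈ S ∧ e.2.1 ∈ S := by
  rcases h with h | h
  exacts [⟨_, h, hx, hy⟩, ⟨_, h, hy, hx⟩]

/-- Let `Γ` be a graph whose underlying unsigned graph is the complete graph on a
4-element vertex set `V`, and let `V' ⊆ V` be a 3-element subset. If a 3-cocycle
`η : A(Γ) → 𝔽₃` takes one and the same value on all hyperplanes corresponding to signed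
edges of the full subgraph on `V'`, then `η` takes one and the same value on all
hyperplanes corresponding to signed edges of `Γ`. -/
theorem full_subgraph_lemma {l : ℕ} (G : SGraph l) (V V' : Finset (Fin l))
    (hV : V.card = 4)
    (hcomplete : ∀ x ∈ V, ∀ y ∈ V, x ≠ y → ∃ ε, G.hasEdge x y ε)
    (hedges : ∀ e ∈ G.edges, e.1 ∈ V ∧ e.2.1 ∈ V)
    (hsub : V' ⊆ V) (hV' : V'.card = 3)
    (η : {H // H ∈ graphArr G} → ZMod 3) (hη : IsCocycle 3 (graphArr G) η)
    (hconst : ∀ H K : {H // H ∈ graphArr G},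
      fromEdgeIn G V' H → fromEdgeIn G V' K → η H = η K) :
    ∀ H K : {H // H ∈ graphArr G},
      fromEdgeIn G V H → fromEdgeIn G V K → η H = η K := by
  -- the fourth vertex d
  obtain ⟨d, hdV', hdV⟩ : ∃ d, d ∉ V' ∧ d ∈ V := by
    have : ¬ V ⊆ V' := fun h => by
      have := Finset.card_le_card h; omega
    obtain ⟨d, hd1, hd2⟩ := Finset.not_subset.mp this
    exact ⟨d, hd2, hd1⟩
  have hVeq : insert d V' = V :=
    Finset.eq_of_subset_of_card_le (Finset.insert_subset hdV hsub)
      (by rw [Finset.card_insert_of_notMem hdV']; omega)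
  -- a base edge inside V'
  obtain ⟨x, hx, y, hy, hxy⟩ := Finset.one_lt_card.mp (show 1 < V'.card by omega)
  obtain ⟨ε0, hE0⟩ := hcomplete x (hsub hx) y (hsub hy) hxy
  obtain ⟨e0, he0, he0x, he0y⟩ := hasEdge_elim G hE0 V' hx hy
  set H0 : {H // H ∈ graphArr G} := ⟨_, edge_mem_arr G he0⟩ with hH0def
  have hH0 : fromEdgeIn G V' H0 := ⟨e0, he0, he0x, he0y, rfl⟩
  have key : ∀ H, fromEdgeIn G V H → η H = η H0 := by
    rintro H ⟨e, he, h1, h2, hHe⟩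
    have hHeq : H = ⟨_, edge_mem_arr G he⟩ := Subtype.ext hHe
    by_cases hcase : e.1 ∈ V' ∧ e.2.1 ∈ V'
    · exact hconst H H0 ⟨e, he, hcase.1, hcase.2, hHe⟩ hH0
    · -- one endpoint of e is d, the other is some u ∈ V'
      have helt : e.1 ≠ e.2.1 := ne_of_lt (G.edges_lt e he)
      rw [← hVeq, Finset.mem_insert] at h1 h2
      obtain ⟨u, hu, hd1⟩ :
          ∃ u, u ∈ V' ∧ ((e.1 = d ∧ e.2.1 = u) ∨ (e.1 = u ∧ e.2.1 = d)) := by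
        rcases h1 with h1 | h1
        · rcases h2 with h2 | h2
          · exact absurd (h1.trans h2.symm) helt
          · exact ⟨e.2.1, h2, Or.inl ⟨h1, rfl⟩⟩
        · rcases h2 with h2 | h2
          · exact ⟨e.1, h1, Or.inr ⟨rfl, h2⟩⟩
          · exact absurd ⟨h1, h2⟩ hcase
      -- the opposite edge inside V'
      obtain ⟨y1, hy1, z1, hz1, hyz⟩ := Finset.one_lt_card.mp
        (show 1 < (V'.erase u).card by rw [Finset.card_erase_of_mem hu]; omega)
      obtain ⟨ε1, hE1⟩ := hcomplete y1 (hsub (Finset.mem_of_mem_erase hy1)) z1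
        (hsub (Finset.mem_of_mem_erase hz1)) hyz
      obtain ⟨e1, he1, h1y, h1z⟩ := hasEdge_elim G hE1 (V'.erase u) hy1 hz1
      have hne1 : ∀ t ∈ V'.erase u, e.1 ≠ t ∧ e.2.1 ≠ t := by
        intro t ht
        have htu : t ≠ u := Finset.ne_of_mem_erase ht
        have htd : t ≠ d := fun h => hdV' (h ▸ Finset.mem_of_mem_erase ht)
        rcases hd1 with ⟨ha, hb⟩ | ⟨ha, hb⟩ <;>
          exact ⟨by rw [ha]; first | exact htd.symm | exact htu.symm,
                 by rw [hb]; first | exact htd.symm | exact htu.symm⟩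
      have step := eta_eq_of_disjoint G η hη he he1
        (hne1 _ h1y).1 (hne1 _ h1z).1 (hne1 _ h1y).2 (hne1 _ h1z).2
      rw [hHeq, step]
      exact hconst _ H0 ⟨e1, he1, Finset.mem_of_mem_erase h1y,
        Finset.mem_of_mem_erase h1z, rfl⟩ hH0
  intro H K hH hK
  rw [key H hH, key K hK]
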